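/- The limit superior as n → ∞ of γ*_e(K_n)/n² is at most 1/23, where γ*_e(K_n) is the porous exponential domination number of the King grid K_n. -/
import Mathlib


open SimpleGraph Finset

/-- The weight `2^(1 - dist(u,v))` that vertex `u` sends to vertex `v` in graph `G`. -/
noncomputable def expWeight {V : Type*} (G : SimpleGraph V) (u v : V) : ℝ :=
  (2 : ℝ) ^ ((1 : ℤ) - (G.dist u v : ℤ))

/-- `D` is a porous exponential dominating set of `G` if every vertex receives total
weight at least `1`. -/
def IsPorousExpDomSet {V : Type*} [Fintype V] (G : SimpleGraph V) (D : Finset V) : Prop :=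
  ∀ v : V, 1 ≤ ∑ d ∈ D, expWeight G d v

/-- The porous exponential domination number: the minimum cardinality of a porous
exponential dominating set. -/
noncomputable def porousExpDomNumber {V : Type*} [Fintype V] (G : SimpleGraph V) : ℕ :=
  sInf {k | ∃ D : Finset V, IsPorousExpDomSet G D ∧ D.card = k}

/-- The King grid `K_n = P_n ⊠ P_n`: vertices `(i,j)` with `1 ≤ i,j ≤ n`, two distinct
vertices adjacent iff both coordinates differ by at most 1. -/
def kingGrid (n : ℕ) : SimpleGraph (Fin n × Fin n) :=
  SimpleGraph.fromRel fun v w =>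
    ((v.1 : ℤ) - (w.1 : ℤ)).natAbs ≤ 1 ∧ ((v.2 : ℤ) - (w.2 : ℤ)).natAbs ≤ 1

/-- The Slant grid `S_n`: the grid `P_n □ P_n` together with the diagonal edges
`(i,j) ~ (i+1,j+1)`. -/
def slantGrid (n : ℕ) : SimpleGraph (Fin n × Fin n) :=
  SimpleGraph.fromRel fun v w =>
    ((w.1 : ℕ) = (v.1 : ℕ) + 1 ∧ (w.2 : ℕ) = (v.2 : ℕ)) ∨
    ((w.1 : ℕ) = (v.1 : ℕ) ∧ (w.2 : ℕ) = (v.2 : ℕ) + 1) ∨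
    ((w.1 : ℕ) = (v.1 : ℕ) + 1 ∧ (w.2 : ℕ) = (v.2 : ℕ) + 1)

/-- The `n`-dimensional hypercube: vertices are `{0,1}^n`, adjacent iff they differ in
exactly one coordinate. -/
def hypercube (n : ℕ) : SimpleGraph (Fin n → Bool) :=
  SimpleGraph.fromRel fun u v => hammingDist u v = 1

def cheb {n : ℕ} (u v : Fin n × Fin n) : ℕ :=
  max ((u.1 : ℤ) - (v.1 : ℤ)).natAbs ((u.2 : ℤ) - (v.2 : ℤ)).natAbs

lemma kingGrid_adj {n : ℕ} {u v : Fin n × Fin n} :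
    (kingGrid n).Adj u v ↔ u ≠ v ∧ cheb u v ≤ 1 := by
  simp only [kingGrid, SimpleGraph.fromRel_adj, cheb, max_le_iff]
  constructor
  · rintro ⟨h, h2 | h2⟩ <;> exact ⟨h, by omega, by omega⟩
  · rintro ⟨h, h1, h2⟩; exact ⟨h, Or.inl ⟨h1, h2⟩⟩

lemma cheb_le_walk_length {n : ℕ} {u v : Fin n × Fin n} (p : (kingGrid n).Walk u v) :
    cheb u v ≤ p.length := by
  induction p with
  | nil => simp [cheb]
  | cons h p ih =>
    rw [kingGrid_adj] at h
    obtain ⟨-, h⟩ := h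
    simp only [SimpleGraph.Walk.length_cons]
    simp only [cheb, max_le_iff] at h ih ⊢
    omega

lemma exists_walk_of_cheb {n : ℕ} : ∀ (k : ℕ) (u v : Fin n × Fin n), cheb u v ≤ k →
    ∃ p : (kingGrid n).Walk u v, p.length ≤ k := by
  intro k
  induction k with
  | zero =>
    intro u v h
    have : u = v := by
      unfold cheb at h
      simp only [Nat.le_zero, max_le_iff] at h
      have h1 : u.1 = v.1 := by apply Fin.ext; omega
      have h2 : u.2 = v.2 := by apply Fin.ext; omega
      exact Prod.ext h1 h2
    subst this
    exact ⟨SimpleGraph.Walk.nil, by simp⟩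
  | succ k ih =>
    intro u v h
    by_cases huv : u = v
    · subst huv; exact ⟨SimpleGraph.Walk.nil, by simp⟩
    · -- step each coordinate toward v
      have hn : 0 < n := Fin.pos u.1
      set w1 : Fin n := if h1 : (u.1 : ℕ) < v.1 then ⟨u.1 + 1, by omega⟩
        else if h2 : (v.1 : ℕ) < u.1 then ⟨(u.1 : ℕ) - 1, by omega⟩ else u.1 with hw1
      set w2 : Fin n := if h1 : (u.2 : ℕ) < v.2 then ⟨u.2 + 1, by omega⟩
        else if h2 : (v.2 : ℕ) < u.2 then ⟨(u.2 : ℕ) - 1, by omega⟩ else u.2 with hw2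
      have hw1v : ((w1 : ℤ) - v.1).natAbs = (u.1 : ℕ) - 1 - (v.1:ℕ) ∨ True := Or.inr trivial
      have key1 : ((w1 : ℤ) - v.1).natAbs + 1 ≤ ((u.1:ℤ) - v.1).natAbs + 1 ∧
          (((u.1:ℤ) - v.1).natAbs ≠ 0 → ((w1 : ℤ) - v.1).natAbs + 1 = ((u.1:ℤ) - v.1).natAbs) ∧
          ((w1:ℤ) - u.1).natAbs ≤ 1 := by
        rw [hw1]; split_ifs with h1 h2 <;> simp <;> omega
      have key2 : ((w2 : ℤ) - v.2).natAbs + 1 ≤ ((u.2:ℤ) - v.2).natAbs + 1 ∧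
          (((u.2:ℤ) - v.2).natAbs ≠ 0 → ((w2 : ℤ) - v.2).natAbs + 1 = ((u.2:ℤ) - v.2).natAbs) ∧
          ((w2:ℤ) - u.2).natAbs ≤ 1 := by
        rw [hw2]; split_ifs with h1 h2 <;> simp <;> omega
      have hne : u ≠ (w1, w2) := by
        intro he
        apply huv
        have e1 : u.1 = w1 := congrArg Prod.fst he
        have e2 : u.2 = w2 := congrArg Prod.snd he
        rw [hw1] at e1; rw [hw2] at e2
        have f1 : (u.1 : ℕ) = (v.1 : ℕ) := by
          by_contra hc
          rcases Nat.lt_or_ge (u.1:ℕ) (v.1:ℕ) with hl | hg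
          · rw [dif_pos hl] at e1; have := congrArg Fin.val e1; simp at this
          · have : (v.1:ℕ) < u.1 := by omega
            rw [dif_neg (by omega), dif_pos this] at e1
            have := congrArg Fin.val e1; simp at this; omega
        have f2 : (u.2 : ℕ) = (v.2 : ℕ) := by
          by_contra hc
          rcases Nat.lt_or_ge (u.2:ℕ) (v.2:ℕ) with hl | hg
          · rw [dif_pos hl] at e2; have := congrArg Fin.val e2; simp at this
          · have : (v.2:ℕ) < u.2 := by omega
            rw [dif_neg (by omega), dif_pos this] at e2
            have := congrArg Fin.val e2; simp at this; omega
        exact Prod.ext (Fin.ext f1) (Fin.ext f2)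
      have hadj : (kingGrid n).Adj u (w1, w2) := by
        rw [kingGrid_adj]
        refine ⟨hne, ?_⟩
        unfold cheb
        simp only [max_le_iff]
        constructor
        · omega
        · omega
      have hch : cheb (w1, w2) v ≤ k := by
        unfold cheb at h ⊢
        simp only [max_le_iff] at h ⊢
        omega
      obtain ⟨p, hp⟩ := ih (w1, w2) v hch
      exact ⟨SimpleGraph.Walk.cons hadj p, by simpa using Nat.succ_le_succ hp⟩

lemma kingGrid_dist {n : ℕ} (u v : Fin n × Fin n) : (kingGrid n).dist u v = cheb u v := by
  obtain ⟨p, hp⟩ := exists_walk_of_cheb (cheb u v) u v le_rfl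
  refine le_antisymm (le_trans (SimpleGraph.dist_le p) hp) ?_
  obtain ⟨q, hq⟩ := (p.reachable).exists_walk_length_eq_dist
  rw [← hq]
  exact cheb_le_walk_length q

def distN (i : ℕ) : ℕ := max (i - 5) (5 - i)
def F (s : ℕ) : ℕ := ∑ i ∈ range 11, ∑ j ∈ range 11,
  if (i + 5*j + s) % 23 = 0 then 2^(5 - max (distN i) (distN j)) else 0
lemma check : ∀ s : Fin 23, 16 ≤ F s.val := by decide

def bigD (n : ℕ) : Finset (Fin n × Fin n) :=
  univ.filter (fun v => ((v.1 : ℕ) + 5 * (v.2 : ℕ)) % 23 = 0 ∨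
    (v.1:ℕ) < 5 ∨ (v.2:ℕ) < 5 ∨ n < (v.1:ℕ) + 6 ∨ n < (v.2:ℕ) + 6)

lemma expWeight_pos {V : Type*} (G : SimpleGraph V) (u v : V) : 0 < expWeight G u v :=
  zpow_pos (by norm_num) _

lemma dom (n : ℕ) : IsPorousExpDomSet (kingGrid n) (bigD n) := by
  intro v
  by_cases hb : (v.1:ℕ) < 5 ∨ (v.2:ℕ) < 5 ∨ n < (v.1:ℕ) + 6 ∨ n < (v.2:ℕ) + 6
  · have hv : v ∈ bigD n := by simp only [bigD, mem_filter, mem_univ, true_and]; tauto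
    calc (1:ℝ) ≤ expWeight (kingGrid n) v v := by
          simp [expWeight, SimpleGraph.dist_self]
      _ ≤ ∑ d ∈ bigD n, expWeight (kingGrid n) d v :=
          Finset.single_le_sum (fun d _ => (expWeight_pos _ d v).le) hv
  · push_neg at hb
    obtain ⟨h1, h2, h3, h4⟩ := hb
    set v1 := (v.1 : ℕ) with hv1
    set v2 := (v.2 : ℕ) with hv2
    have hs23 : (v1 + 5 * v2 + 16) % 23 < 23 := Nat.mod_lt _ (by norm_num)
    set s : ℕ := (v1 + 5 * v2 + 16) % 23 with hs
    set f : ℕ × ℕ → Fin n × Fin n := fun p =>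
      (⟨v1 - 5 + min p.1 10, by omega⟩, ⟨v2 - 5 + min p.2 10, by omega⟩) with hf
    set P : Finset (ℕ × ℕ) := (range 11 ×ˢ range 11).filter
      (fun p => (p.1 + 5*p.2 + s) % 23 = 0) with hP
    have hmemP : ∀ p ∈ P, p.1 < 11 ∧ p.2 < 11 ∧ (p.1 + 5*p.2 + s) % 23 = 0 := by
      intro p hp
      simp only [hP, mem_filter, mem_product, mem_range] at hp
      tauto
    have hinj : Set.InjOn f P := by
      intro p hp q hq he
      obtain ⟨hp1, hp2, -⟩ := hmemP p hp
      obtain ⟨hq1, hq2, -⟩ := hmemP q hq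
      have e1 : v1 - 5 + min p.1 10 = v1 - 5 + min q.1 10 :=
        congrArg (fun x => (x.1 : ℕ)) he
      have e2 : v2 - 5 + min p.2 10 = v2 - 5 + min q.2 10 :=
        congrArg (fun x => (x.2 : ℕ)) he
      exact Prod.ext (by omega) (by omega)
    have hsub : ∀ p ∈ P, f p ∈ bigD n := by
      intro p hp
      obtain ⟨hp1, hp2, hp3⟩ := hmemP p hp
      simp only [bigD, mem_filter, mem_univ, true_and, hf]
      left
      omega
    have hweight : ∀ p ∈ P, expWeight (kingGrid n) (f p) v =
        (2:ℝ) ^ (5 - max (distN p.1) (distN p.2)) * (2:ℝ) ^ (-(4:ℤ)) := by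
      intro p hp
      obtain ⟨hp1, hp2, -⟩ := hmemP p hp
      have hd : (kingGrid n).dist (f p) v = max (distN p.1) (distN p.2) := by
        rw [kingGrid_dist]
        have a1 : (((f p).1 : ℤ) - (v.1 : ℤ)).natAbs = distN p.1 := by
          simp only [hf, distN]; push_cast; omega
        have a2 : (((f p).2 : ℤ) - (v.2 : ℤ)).natAbs = distN p.2 := by
          simp only [hf, distN]; push_cast; omega
        simp only [cheb]
        rw [a1, a2]
      have hdle : max (distN p.1) (distN p.2) ≤ 5 := by
        simp only [distN]; omega
      rw [expWeight, hd]
      rw [← zpow_natCast (2:ℝ) (5 - max (distN p.1) (distN p.2)), ← zpow_add₀ (by norm_num : (2:ℝ) ≠ 0)]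
      congr 1
      omega
    have hFsum : ∑ p ∈ P, (2:ℝ) ^ (5 - max (distN p.1) (distN p.2)) = (F s : ℝ) := by
      rw [F, ← Finset.sum_product']
      rw [hP, Finset.sum_filter]
      push_cast
      rfl
    have h16 : (16:ℝ) ≤ (F s : ℝ) := by
      exact_mod_cast check ⟨s, hs23⟩
    calc (1:ℝ) = 16 * (2:ℝ) ^ (-(4:ℤ)) := by norm_num
      _ ≤ (F s : ℝ) * (2:ℝ) ^ (-(4:ℤ)) := by
          apply mul_le_mul_of_nonneg_right h16 (by positivity)
      _ = ∑ p ∈ P, expWeight (kingGrid n) (f p) v := by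
          rw [Finset.sum_congr rfl hweight, ← Finset.sum_mul, hFsum]
      _ = ∑ d ∈ P.image f, expWeight (kingGrid n) d v := by
          rw [Finset.sum_image (fun p hp q hq => hinj hp hq)]
      _ ≤ ∑ d ∈ bigD n, expWeight (kingGrid n) d v := by
          apply Finset.sum_le_sum_of_subset_of_nonneg
          · intro d hd
            obtain ⟨p, hp, rfl⟩ := Finset.mem_image.mp hd
            exact hsub p hp
          · exact fun d _ _ => (expWeight_pos _ d v).le

lemma card_bigD (n : ℕ) : (bigD n).card ≤ (n/23 + 1) * n + 22 * n := by
  classical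
  have key : ∀ (P : Fin n × Fin n → Prop) [DecidablePred P] (k : ℕ)
      (g : Fin n × Fin n → ℕ × Fin n),
      (∀ v, P v → g v ∈ range k ×ˢ (univ : Finset (Fin n))) →
      (∀ v w, P v → P w → g v = g w → v = w) →
      (univ.filter P).card ≤ k * n := by
    intro P _ k g hmem hinj
    have := Finset.card_le_card_of_injOn (s := univ.filter P) (t := range k ×ˢ (univ : Finset (Fin n))) g
      (fun v hv => hmem v (mem_filter.mp hv).2)
      (fun v hv w hw h => hinj v w (mem_filter.mp hv).2 (mem_filter.mp hw).2 h)
    simpa [Finset.card_product, Finset.card_range] using this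
  have split : bigD n ⊆
      (univ.filter (fun v : Fin n × Fin n => ((v.1 : ℕ) + 5 * (v.2 : ℕ)) % 23 = 0)) ∪
      (univ.filter (fun v : Fin n × Fin n => (v.1:ℕ) < 5)) ∪
      (univ.filter (fun v : Fin n × Fin n => (v.2:ℕ) < 5)) ∪
      (univ.filter (fun v : Fin n × Fin n => n < (v.1:ℕ) + 6)) ∪
      (univ.filter (fun v : Fin n × Fin n => n < (v.2:ℕ) + 6)) := by
    intro v hv
    simp only [bigD, mem_filter, mem_univ, true_and] at hv
    simp only [mem_union, mem_filter, mem_univ, true_and]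
    tauto
  have c0 : (univ.filter (fun v : Fin n × Fin n =>
      ((v.1 : ℕ) + 5 * (v.2 : ℕ)) % 23 = 0)).card ≤ (n/23 + 1) * n := by
    apply key _ _ (fun v => ((v.1 : ℕ)/23, v.2))
    · intro v _
      simp only [mem_product, mem_range, mem_univ, and_true]
      have := v.1.isLt
      omega
    · intro v w hv hw h
      have e1 : (v.1 : ℕ)/23 = (w.1 : ℕ)/23 := congrArg (fun x : ℕ × Fin n => x.1) h
      have e2 : v.2 = w.2 := congrArg (fun x : ℕ × Fin n => x.2) h
      rw [e2] at hv
      exact Prod.ext (Fin.ext (by omega)) e2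
  have c1 : (univ.filter (fun v : Fin n × Fin n => (v.1:ℕ) < 5)).card ≤ 5 * n := by
    apply key _ _ (fun v => ((v.1 : ℕ), v.2))
    · intro v hv; simp only [mem_product, mem_range, mem_univ, and_true]; omega
    · intro v w _ _ h
      exact Prod.ext (Fin.ext (congrArg (fun x : ℕ × Fin n => x.1) h)) (congrArg (fun x : ℕ × Fin n => x.2) h)
  have c2 : (univ.filter (fun v : Fin n × Fin n => (v.2:ℕ) < 5)).card ≤ 5 * n := by
    apply key _ _ (fun v => ((v.2 : ℕ), v.1))
    · intro v hv; simp only [mem_product, mem_range, mem_univ, and_true]; omega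
    · intro v w _ _ h
      exact Prod.ext (congrArg (fun x : ℕ × Fin n => x.2) h) (Fin.ext (congrArg (fun x : ℕ × Fin n => x.1) h))
  have c3 : (univ.filter (fun v : Fin n × Fin n => n < (v.1:ℕ) + 6)).card ≤ 6 * n := by
    apply key _ _ (fun v => ((v.1 : ℕ) + 6 - n, v.2))
    · intro v hv
      simp only [mem_product, mem_range, mem_univ, and_true]
      have := v.1.isLt
      omega
    · intro v w hv hw h
      have e1 : (v.1:ℕ) + 6 - n = (w.1:ℕ) + 6 - n := congrArg (fun x : ℕ × Fin n => x.1) h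
      exact Prod.ext (Fin.ext (by omega)) (congrArg (fun x : ℕ × Fin n => x.2) h)
  have c4 : (univ.filter (fun v : Fin n × Fin n => n < (v.2:ℕ) + 6)).card ≤ 6 * n := by
    apply key _ _ (fun v => ((v.2 : ℕ) + 6 - n, v.1))
    · intro v hv
      simp only [mem_product, mem_range, mem_univ, and_true]
      have := v.2.isLt
      omega
    · intro v w hv hw h
      have e1 : (v.2:ℕ) + 6 - n = (w.2:ℕ) + 6 - n := congrArg (fun x : ℕ × Fin n => x.1) h
      exact Prod.ext (congrArg (fun x : ℕ × Fin n => x.2) h) (Fin.ext (by omega))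
  calc (bigD n).card ≤ _ := Finset.card_le_card split
    _ ≤ _ := le_trans (Finset.card_union_le _ _) (add_le_add
        (le_trans (Finset.card_union_le _ _) (add_le_add
          (le_trans (Finset.card_union_le _ _) (add_le_add
            (le_trans (Finset.card_union_le _ _) (add_le_add c0 c1)) c2)) c3)) c4)
    _ ≤ (n/23 + 1) * n + 22 * n := by omega


lemma ratio_bound (n : ℕ) (hn : 1 ≤ n) :
    (porousExpDomNumber (kingGrid n) : ℝ) / (n:ℝ)^2 ≤ 1/23 + 23/(n:ℝ) := by
  have hg : porousExpDomNumber (kingGrid n) ≤ (n/23 + 1) * n + 22*n := by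
    refine le_trans ?_ (card_bigD n)
    exact Nat.sInf_le ⟨bigD n, dom n, rfl⟩
  have hn0 : (0:ℝ) < (n:ℝ) := by exact_mod_cast hn
  rw [div_le_iff₀ (by positivity)]
  have hdiv : ((n/23 : ℕ) : ℝ) ≤ (n:ℝ)/23 := Nat.cast_div_le
  calc (porousExpDomNumber (kingGrid n) : ℝ)
      ≤ (((n/23+1)*n + 22*n : ℕ) : ℝ) := by exact_mod_cast hg
    _ = (((n/23:ℕ):ℝ)+1)*(n:ℝ) + 22*(n:ℝ) := by push_cast; ring
    _ ≤ ((n:ℝ)/23+1)*(n:ℝ) + 22*(n:ℝ) := by nlinarith [hdiv, hn0.le]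
    _ = (1/23 + 23/(n:ℝ))*(n:ℝ)^2 := by field_simp; ring

/-- `limsup_{n → ∞} γ*_e(K_n)/n² ≤ 1/23`. -/
theorem kingGrid_porousExpDomNumber_limsup :
    Filter.limsup (fun n : ℕ => (porousExpDomNumber (kingGrid n) : ℝ) / (n : ℝ) ^ 2)
      Filter.atTop ≤ 1 / 23 := by
  have hf0 : ∀ᶠ n : ℕ in Filter.atTop,
      0 ≤ (porousExpDomNumber (kingGrid n) : ℝ) / (n : ℝ) ^ 2 :=
    Filter.Eventually.of_forall (fun n => by positivity)
  set f : ℕ → ℝ := fun n => (porousExpDomNumber (kingGrid n) : ℝ) / (n : ℝ) ^ 2 with hfdef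
  set g : ℕ → ℝ := fun n => 1/23 + 23/(n:ℝ) with hg
  have hle : ∀ᶠ n : ℕ in Filter.atTop, f n ≤ g n :=
    Filter.eventually_atTop.mpr ⟨1, ratio_bound⟩
  have hgb : ∀ᶠ n : ℕ in Filter.atTop, g n ≤ 1/23 + 23 := by
    filter_upwards [Filter.eventually_ge_atTop 1] with n hn
    have h1 : (1:ℝ) ≤ n := by exact_mod_cast hn
    have h2 : 23/(n:ℝ) ≤ 23 := by
      rw [div_le_iff₀ (by linarith)]; nlinarith
    simp only [hg]; linarith
  have hcob : Filter.IsCoboundedUnder (· ≤ ·) Filter.atTop f :=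
    Filter.isCoboundedUnder_le_of_eventually_le Filter.atTop (x := 0)
      (by filter_upwards [hf0] with n h1; exact h1)
  have hbdd : Filter.IsBoundedUnder (· ≤ ·) Filter.atTop g :=
    Filter.isBoundedUnder_of_eventually_le hgb
  have hten : Filter.Tendsto g Filter.atTop (nhds (1/23)) := by
    have := (tendsto_const_nhds (x := (1/23 : ℝ)) (f := Filter.atTop (α := ℕ))).add
      (tendsto_const_div_atTop_nhds_zero_nat 23)
    have e : g = fun n : ℕ => 1/23 + 23/(n:ℝ) := hg
    rw [e]
    simpa using this
  calc Filter.limsup f Filter.atTop ≤ Filter.limsup g Filter.atTop :=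
        Filter.limsup_le_limsup hle hcob hbdd
    _ = 1/23 := hten.limsup_eq
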